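/- arXiv:1801.06045 — 2 statements merged into one kernel-verified Lean document; each statement's English description precedes it below -/
import Mathlib

section
/- For every probability map p between MV-algebras and all a, b, one has p(a ⊙ b) ≥ p(a) ⊙ p(b); and if a ⊙ b = 0 then p(a) ⊙ p(b) = 0. -/
/-- An MV-algebra: a commutative monoid `(M, ⊕, 0)` with an involutive negation
satisfying `a ⊕ ¬0 = ¬0` and the Łukasiewicz axiom. -/
structure MVAlgebra (M : Type*) where
  oplus : M → M → M
  mvneg : M → M
  zero : M
  oplus_assoc : ∀ a b c, oplus (oplus a b) c = oplus a (oplus b c)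
  oplus_comm : ∀ a b, oplus a b = oplus b a
  oplus_zero : ∀ a, oplus a zero = a
  mvneg_mvneg : ∀ a, mvneg (mvneg a) = a
  oplus_neg_zero : ∀ a, oplus a (mvneg zero) = mvneg zero
  luk : ∀ a b, oplus (mvneg (oplus (mvneg a) b)) b = oplus (mvneg (oplus (mvneg b) a)) a

namespace MVAlgebra

variable {M : Type*} (A : MVAlgebra M)

/-- `1 := ¬0`. -/
def one : M := A.mvneg A.zero

/-- `a ⊙ b := ¬(¬a ⊕ ¬b)`. -/
def otimes (a b : M) : M := A.mvneg (A.oplus (A.mvneg a) (A.mvneg b))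

/-- `a ⊖ b := a ⊙ ¬b`. -/
def ominus (a b : M) : M := A.otimes a (A.mvneg b)

/-- `a ∨ b := ¬(¬a ⊕ b) ⊕ b`. -/
def sup (a b : M) : M := A.oplus (A.mvneg (A.oplus (A.mvneg a) b)) b

/-- `a ∧ b := a ⊙ (¬a ⊕ b)`. -/
def inf (a b : M) : M := A.otimes a (A.oplus (A.mvneg a) b)

/-- The natural order: `a ≤ b` iff `¬a ⊕ b = 1`. -/
def le (a b : M) : Prop := A.oplus (A.mvneg a) b = A.one

end MVAlgebra

/-- A probability map `p : M → N` between MV-algebras: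
(P1) `p(a ⊕ b) = p(a) ⊕ p(b ∧ ¬a)`, (P2) `p(¬a) = ¬p(a)`, (P3) `p(1) = 1`. -/
structure IsProbabilityMap {M N : Type*} (A : MVAlgebra M) (B : MVAlgebra N)
    (p : M → N) : Prop where
  p1 : ∀ a b, p (A.oplus a b) = B.oplus (p a) (p (A.inf b (A.mvneg a)))
  p2 : ∀ a, p (A.mvneg a) = B.mvneg (p a)
  p3 : p A.one = B.one

namespace MVAux

variable {M : Type*} (A : MVAlgebra M)

lemma zero_oplus (a : M) : A.oplus A.zero a = a := by
  rw [A.oplus_comm, A.oplus_zero]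

lemma oplus_one (a : M) : A.oplus a A.one = A.one := A.oplus_neg_zero a

lemma one_oplus (a : M) : A.oplus A.one a = A.one := by
  rw [A.oplus_comm]; exact A.oplus_neg_zero a

lemma neg_one : A.mvneg A.one = A.zero := A.mvneg_mvneg A.zero

lemma neg_oplus_self (a : M) : A.oplus (A.mvneg a) a = A.one := by
  have h := A.luk A.one a
  rw [neg_one, zero_oplus] at h
  rw [h, oplus_one]

lemma self_oplus_neg (a : M) : A.oplus a (A.mvneg a) = A.one := by
  rw [A.oplus_comm]; exact neg_oplus_self A a

lemma le_oplus (a b : M) : A.le a (A.oplus a b) := by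
  unfold MVAlgebra.le
  rw [← A.oplus_assoc, neg_oplus_self, one_oplus]

lemma eq_one_of_one_le {a : M} (h : A.le A.one a) : a = A.one := by
  unfold MVAlgebra.le at h
  rwa [neg_one, zero_oplus] at h

lemma sup_comm (a b : M) : A.sup a b = A.sup b a := A.luk a b

lemma sup_eq_of_le {a b : M} (h : A.le a b) : A.sup a b = b := by
  unfold MVAlgebra.sup
  unfold MVAlgebra.le at h
  rw [h, neg_one, zero_oplus]

lemma decomp {a b : M} (h : A.le a b) :
    A.oplus a (A.otimes b (A.mvneg a)) = b := by
  have : A.otimes b (A.mvneg a) = A.mvneg (A.oplus (A.mvneg b) a) := by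
    unfold MVAlgebra.otimes
    rw [A.mvneg_mvneg]
  rw [this, A.oplus_comm]
  have h2 : A.sup b a = b := by rw [sup_comm, sup_eq_of_le A h]
  exact h2

lemma oplus_le_oplus {a b : M} (c : M) (h : A.le a b) :
    A.le (A.oplus c a) (A.oplus c b) := by
  rw [← decomp A h, ← A.oplus_assoc]
  exact le_oplus A _ _

lemma neg_le_neg {a b : M} (h : A.le a b) : A.le (A.mvneg b) (A.mvneg a) := by
  unfold MVAlgebra.le at h ⊢
  rw [A.mvneg_mvneg, A.oplus_comm]
  exact h

lemma otimes_le_left (a b : M) : A.le (A.otimes a b) a := by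
  unfold MVAlgebra.le MVAlgebra.otimes
  rw [A.mvneg_mvneg, A.oplus_comm, ← A.oplus_assoc, self_oplus_neg, one_oplus]

lemma inf_le_left (a b : M) : A.le (A.inf a b) a := otimes_le_left A _ _

lemma p_mono {N : Type*} (B : MVAlgebra N) {p : M → N}
    (hp : IsProbabilityMap A B p) {a b : M} (h : A.le a b) : B.le (p a) (p b) := by
  rw [← decomp A h, hp.p1]
  exact le_oplus B _ _

end MVAux

/-- `p(a ⊙ b) ≥ p(a) ⊙ p(b)`, and if `a ⊙ b = 0` then `p(a) ⊙ p(b) = 0`. -/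
theorem probabilityMap_otimes {M N : Type*} (A : MVAlgebra M) (B : MVAlgebra N)
    (p : M → N) (hp : IsProbabilityMap A B p) :
    ∀ a b : M, B.le (B.otimes (p a) (p b)) (p (A.otimes a b)) ∧
      (A.otimes a b = A.zero → B.otimes (p a) (p b) = B.zero) := by
  intro a b
  open MVAux in
  -- key: p(¬b ∧ a) ≤ ¬ p b
  have hkey : B.le (p (A.inf (A.mvneg b) a)) (B.mvneg (p b)) := by
    have h1 : A.le (A.inf (A.mvneg b) a) (A.mvneg b) := inf_le_left A _ _
    have h2 := p_mono A B hp h1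
    rwa [hp.p2] at h2
  -- p(¬a ⊕ ¬b) expansion
  have hexp : p (A.oplus (A.mvneg a) (A.mvneg b)) =
      B.oplus (B.mvneg (p a)) (p (A.inf (A.mvneg b) (A.mvneg (A.mvneg a)))) := by
    rw [hp.p1, hp.p2]
  rw [A.mvneg_mvneg] at hexp
  have hle : B.le (p (A.oplus (A.mvneg a) (A.mvneg b)))
      (B.oplus (B.mvneg (p a)) (B.mvneg (p b))) := by
    rw [hexp]
    exact oplus_le_oplus B _ hkey
  constructor
  · -- p a ⊙ p b ≤ p (a ⊙ b)
    have := neg_le_neg B hle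
    have hpo : p (A.otimes a b) = B.mvneg (p (A.oplus (A.mvneg a) (A.mvneg b))) := by
      unfold MVAlgebra.otimes
      rw [hp.p2]
    rw [hpo]
    exact this
  · intro h0
    -- ¬a ⊕ ¬b = 1 in M
    have h1 : A.oplus (A.mvneg a) (A.mvneg b) = A.one := by
      have : A.mvneg (A.otimes a b) = A.mvneg A.zero := by rw [h0]
      unfold MVAlgebra.otimes at this
      rwa [A.mvneg_mvneg] at this
    have h2 : p (A.oplus (A.mvneg a) (A.mvneg b)) = B.one := by rw [h1, hp.p3]
    rw [h2] at hle
    have h3 : B.oplus (B.mvneg (p a)) (B.mvneg (p b)) = B.one :=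
      eq_one_of_one_le B hle
    unfold MVAlgebra.otimes
    rw [h3, neg_one]
end

section
/- Let (G,u) and (H,v) be unital lattice-ordered abelian groups and let p : [0,u] → [0,v] satisfy p(0) = 0, p(u) = v, and p(a ⊕ b) = p(a) + p(b) whenever a, b ∈ [0,u] with a + b ≤ u. Then p is additive in the strong sense: p((a + b) ∧ u) = p(a) + p(b) − p((a + b − u) ∨ 0) for all a, b ∈ [0,u]. -/
/-- Let `(G,u)` and `(H,v)` be unital lattice-ordered abelian groups and
`p : [0,u] → [0,v]` with `p 0 = 0`, `p u = v`, additive on pairs `a, b ∈ [0,u]`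
with `a + b ≤ u`. Then `p((a+b) ⊓ u) = p a + p b - p((a+b-u) ⊔ 0)` for all
`a, b ∈ [0,u]`. -/
theorem probabilityMap_strong_additivity {G H : Type*}
    [Lattice G] [AddCommGroup G] [CovariantClass G G (· + ·) (· ≤ ·)]
    [Lattice H] [AddCommGroup H] [CovariantClass H H (· + ·) (· ≤ ·)]
    (u : G) (hu : 0 ≤ u) (v : H) (hv : 0 ≤ v) (p : G → H)
    (hrange : ∀ a, 0 ≤ a → a ≤ u → 0 ≤ p a ∧ p a ≤ v)
    (h0 : p 0 = 0) (h1 : p u = v)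
    (hadd : ∀ a b, 0 ≤ a → a ≤ u → 0 ≤ b → b ≤ u → a + b ≤ u →
      p (a + b) = p a + p b) :
    ∀ a b, 0 ≤ a → a ≤ u → 0 ≤ b → b ≤ u →
      p ((a + b) ⊓ u) = p a + p b - p ((a + b - u) ⊔ 0) := by
  intro a b ha hau hb hbu
  set c : G := (a + b - u) ⊔ 0 with hc
  set d : G := b ⊓ (u - a) with hd
  have hd0 : 0 ≤ d := le_inf hb (sub_nonneg.2 hau)
  have hdb : d ≤ b := inf_le_left
  have hdu : d ≤ u := hdb.trans hbu
  have hc0 : 0 ≤ c := le_sup_right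
  have hcb : c ≤ b := by
    refine sup_le ?_ hb
    have := add_le_add_right hau b
    simpa [sub_le_iff_le_add, add_comm] using this
  have hcu : c ≤ u := hcb.trans hbu
  have hdc : d + c = b := by
    have hbd : b - d = c := by
      rw [hd, hc, sub_inf, sub_self, sup_comm]
      congr 1
      abel
    rw [← hbd]
    abel
  have had : a + d = (a + b) ⊓ u := by
    rw [hd, add_inf]
    congr 1
    abel
  have hadu : a + d ≤ u := had ▸ inf_le_right
  have hb' : p b = p d + p c := by
    rw [← hdc]
    exact hadd d c hd0 hdu hc0 hcu (hdc ▸ hbu)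
  have hmain : p ((a + b) ⊓ u) = p a + p d := by
    rw [← had]; exact hadd a d ha hau hd0 hdu hadu
  rw [hmain, hb']
  abel
end
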